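/- Let n and r be positive integers. In the ring ℤ[[X]] of formal power series, (1 − X)^{n+1} · Σ_{m ≥ 0} C(n + rm, n) X^m = Σ_{w ∈ {0,1,…,r−1}^n} X^{asc(w)}, where the right-hand side is the polynomial enumerating all words w = (w_1, …, w_n) ∈ {0,1,…,r−1}^n by their number of ascents. -/

import Mathlib

open scoped Classical

noncomputable section

/-- Entry of a word `u : Fin m → ℕ` at a natural index (junk value `0` out of range). -/
def uv {m : ℕ} (u : Fin m → ℕ) (k : ℕ) : ℕ :=
  if h : k < m then u ⟨k, h⟩ else 0

/-- The number of ascents of the word `w = (w_1, …, w_m)` given by `u : Fin m → ℕ`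
(so `w_{i+1} = u i`), with the convention `w_0 = 0`: the number of indices
`i ∈ {0,…,m-1}` with `w_i < w_{i+1}`. -/
def asc' {m : ℕ} (u : Fin m → ℕ) : ℕ :=
  ((Finset.range m).filter fun i =>
    (if i = 0 then 0 else uv u (i - 1)) < uv u i).card

/-- Chain condition: `Q 0 + g 0 ≤ M`, `Q 1 + g 1 ≤ Q 0`, `Q 2 + g 2 ≤ Q 1`, … -/
def Pchain : (n : ℕ) → ℕ → (Fin n → ℕ) → (Fin n → ℕ) → Prop
  | 0, _, _, _ => True
  | n + 1, M, g, Q => Q 0 + g 0 ≤ M ∧ Pchain n (Q 0) (Fin.tail g) (Fin.tail Q)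

/-- The finset of chains. -/
def Sset (n M : ℕ) (g : Fin n → ℕ) : Finset (Fin n → ℕ) :=
  (Fintype.piFinset fun _ : Fin n => Finset.range (M + 1)).filter fun Q => Pchain n M g Q

lemma Pchain_le : ∀ {n M : ℕ} {g Q : Fin n → ℕ}, Pchain n M g Q → ∀ k, Q k ≤ M := by
  intro n
  induction n with
  | zero => intro M g Q _ k; exact absurd k.2 (by omega)
  | succ n ih =>
    intro M g Q h k
    obtain ⟨h1, h2⟩ := h
    refine Fin.cases ?_ ?_ k
    · omega
    · intro j
      have := ih h2 j
      simp only [Fin.tail] at this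
      omega

lemma mem_Sset {n M : ℕ} {g Q : Fin n → ℕ} :
    Q ∈ Sset n M g ↔ Pchain n M g Q := by
  constructor
  · intro h; exact (Finset.mem_filter.1 h).2
  · intro h
    refine Finset.mem_filter.2 ⟨?_, h⟩
    refine Fintype.mem_piFinset.2 fun k => ?_
    simpa using Nat.lt_succ_of_le (Pchain_le h k)

/-- Hockey stick. -/
lemma hstick (n : ℕ) : ∀ K : ℕ,
    ∑ u ∈ Finset.range (K + 1), (u + n).choose n = (K + n + 1).choose (n + 1) := by
  intro K
  induction K with
  | zero => simp
  | succ K ih =>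
    rw [Finset.sum_range_succ, ih]
    have h := Nat.choose_succ_succ' (K + n + 1) n
    -- (K+n+2).choose (n+1) = (K+n+1).choose n + (K+n+1).choose (n+1)
    have : (K + 1 + n + 1).choose (n + 1) = (K + n + 1).choose n + (K + n + 1).choose (n + 1) := by
      have := Nat.choose_succ_succ (K + n + 1) n
      convert this using 2 <;> omega
    rw [this]
    have : K + 1 + n = K + n + 1 := by omega
    rw [this]
    omega

lemma card_Sset : ∀ (n : ℕ) (M : ℕ) (g : Fin n → ℕ),
    (Sset n M g).card =
      if (∑ k, g k) ≤ M then ((M - ∑ k, g k) + n).choose n else 0 := by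
  intro n
  induction n with
  | zero =>
    intro M g
    have hset : Sset 0 M g = {fun _ => 0} := by
      refine Finset.eq_singleton_iff_unique_mem.2 ⟨mem_Sset.2 (by trivial), ?_⟩
      intro Q _
      exact Subsingleton.elim _ _
    rw [hset, Finset.card_singleton]
    simp
  | succ n ih =>
    intro M g
    have hmap : ∀ Q ∈ Sset (n + 1) M g, Q 0 ∈ Finset.range (M + 1) := by
      intro Q hQ
      exact Finset.mem_range.2 (Nat.lt_succ_of_le (Pchain_le (mem_Sset.1 hQ) 0))
    rw [Finset.card_eq_sum_card_fiberwise hmap]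
    have key : ∀ t ∈ Finset.range (M + 1),
        ((Sset (n + 1) M g).filter fun Q => Q 0 = t).card =
          if t + g 0 ≤ M ∧ (∑ k, Fin.tail g k) ≤ t then
            ((t - ∑ k, Fin.tail g k) + n).choose n else 0 := by
      intro t _
      by_cases ht : t + g 0 ≤ M
      · have hcard : ((Sset (n + 1) M g).filter fun Q => Q 0 = t).card
            = (Sset n t (Fin.tail g)).card := by
          refine Finset.card_bij' (fun Q _ => Fin.tail Q) (fun Q _ => Fin.cons t Q) ?_ ?_ ?_ ?_
          · intro Q hQ
            have h := (Finset.mem_filter.1 hQ)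
            obtain ⟨hP1, hP2⟩ := mem_Sset.1 h.1
            rw [mem_Sset]
            rw [h.2] at hP2
            exact hP2
          · intro Q hQ
            have hP := mem_Sset.1 hQ
            refine Finset.mem_filter.2 ⟨mem_Sset.2 ?_, by simp⟩
            refine ⟨by simpa using ht, ?_⟩
            simpa [Fin.tail_cons] using hP
          · intro Q hQ
            have h2 := (Finset.mem_filter.1 hQ).2
            subst h2
            exact (Fin.cons_self_tail Q)
          · intro Q _; simp
        rw [hcard, ih t (Fin.tail g)]
        by_cases hs : (∑ k, Fin.tail g k) ≤ t
        · rw [if_pos hs, if_pos ⟨ht, hs⟩]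
        · rw [if_neg hs, if_neg (by tauto)]
      · rw [if_neg (by tauto)]
        rw [Finset.card_eq_zero]
        rw [Finset.eq_empty_iff_forall_notMem]
        intro Q hQ
        have h := Finset.mem_filter.1 hQ
        obtain ⟨hP1, hP2⟩ := mem_Sset.1 h.1
        rw [h.2] at hP1
        exact ht hP1
    rw [Finset.sum_congr rfl key]
    have hsum : ∑ k, g k = g 0 + ∑ k, Fin.tail g k := by
      rw [Fin.sum_univ_succ]; rfl
    set s := ∑ k, Fin.tail g k with hs
    by_cases h : (∑ k, g k) ≤ M
    · rw [if_pos h]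
      have hgs : g 0 + s ≤ M := by omega
      -- the nonzero terms are t ∈ [s, M - g 0]
      have hfil : ∀ t ∈ Finset.range (M + 1),
          (if t + g 0 ≤ M ∧ s ≤ t then ((t - s) + n).choose n else 0)
            = if t ∈ (Finset.range (M - g 0 - s + 1)).map
                ⟨fun u => u + s, add_left_injective s⟩ then ((t - s) + n).choose n else 0 := by
        intro t _
        refine if_congr ?_ rfl rfl
        simp only [Finset.mem_map, Finset.mem_range, Function.Embedding.coeFn_mk]
        constructor
        · rintro ⟨h1, h2⟩; exact ⟨t - s, by omega, by omega⟩
        · rintro ⟨u, hu, rfl⟩; omega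
      rw [Finset.sum_congr rfl hfil]
      rw [Finset.sum_ite_mem]
      have hsub : (Finset.range (M + 1)) ∩ ((Finset.range (M - g 0 - s + 1)).map
          ⟨fun u => u + s, add_left_injective s⟩)
          = (Finset.range (M - g 0 - s + 1)).map ⟨fun u => u + s, add_left_injective s⟩ := by
        refine Finset.inter_eq_right.2 ?_
        intro t ht
        simp only [Finset.mem_map, Finset.mem_range, Function.Embedding.coeFn_mk] at ht
        obtain ⟨u, hu, rfl⟩ := ht
        exact Finset.mem_range.2 (by omega)
      rw [hsub, Finset.sum_map]
      simp only [Function.Embedding.coeFn_mk, Nat.add_sub_cancel]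
      rw [hstick n (M - g 0 - s)]
      congr 1
      omega
    · rw [if_neg h]
      refine Finset.sum_eq_zero fun t ht => ?_
      rw [if_neg]
      rintro ⟨h1, h2⟩
      omega

/-- Ascent indicator vector, with `prev` the letter preceding the word. -/
def gvec : (n : ℕ) → ℕ → (Fin n → ℕ) → (Fin n → ℕ)
  | 0, _, _ => fun _ => 0
  | n + 1, prev, w => Fin.cons (if prev < w 0 then 1 else 0) (gvec n (w 0) (Fin.tail w))

lemma uv_tail {n : ℕ} (w : Fin (n + 1) → ℕ) (j : ℕ) :
    uv (Fin.tail w) j = uv w (j + 1) := by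
  unfold uv
  by_cases h : j < n
  · rw [dif_pos h, dif_pos (by omega)]
    rfl
  · rw [dif_neg h, dif_neg (by omega)]

lemma uv_zero {n : ℕ} (w : Fin (n + 1) → ℕ) : uv w 0 = w 0 := by
  unfold uv
  rw [dif_pos (by omega)]
  rfl

lemma gvec_sum : ∀ (n prev : ℕ) (w : Fin n → ℕ),
    (∑ k, gvec n prev w k) =
      ((Finset.range n).filter fun i =>
        (if i = 0 then prev else uv w (i - 1)) < uv w i).card := by
  intro n
  induction n with
  | zero => intro prev w; simp [gvec]
  | succ n ih =>
    intro prev w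
    rw [Finset.card_filter]
    rw [Finset.sum_range_succ']
    rw [Fin.sum_univ_succ]
    simp only [gvec, Fin.cons_zero, Fin.cons_succ]
    rw [ih (w 0) (Fin.tail w)]
    rw [Finset.card_filter]
    have hterm : (if (0 : ℕ) = 0 then prev else uv w (0 - 1)) = prev := by simp
    rw [add_comm]
    congr 1
    · refine Finset.sum_congr rfl fun j _ => ?_
      congr 1
      have h1 : uv (Fin.tail w) j = uv w (j + 1) := uv_tail w j
      by_cases hj : j = 0
      · subst hj
        simp [uv_zero, uv_tail w 0]
      · have : j - 1 + 1 = j := by omega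
        rw [if_neg hj, if_neg (by omega : ¬ j + 1 = 0)]
        rw [uv_tail w (j - 1), this, h1, Nat.add_sub_cancel]
lemma asc'_eq_gvec_sum {n : ℕ} (w : Fin n → ℕ) : asc' w = ∑ k, gvec n 0 w k := by
  rw [gvec_sum n 0 w]; rfl

/-- Division with remainder comparison. -/
lemma rle {r : ℕ} (a b u v : ℕ) (hu : u < r) (hv : v < r) :
    r * a + u ≤ r * b + v ↔ a + (if v < u then 1 else 0) ≤ b := by
  split_ifs with h
  · constructor
    · intro hle
      by_contra hc
      have hba : b ≤ a := by omega
      have := Nat.mul_le_mul_left r hba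
      omega
    · intro hab
      have h1 : r * (a + 1) ≤ r * b := Nat.mul_le_mul_left r hab
      have h2 : r * (a + 1) = r * a + r := by ring
      omega
  · simp only [add_zero]
    constructor
    · intro hle
      by_contra hc
      have hba : b + 1 ≤ a := by omega
      have h1 : r * (b + 1) ≤ r * a := Nat.mul_le_mul_left r hba
      have h2 : r * (b + 1) = r * b + r := by ring
      omega
    · intro hab
      have := Nat.mul_le_mul_left r hab
      omega

lemma tail_div {n : ℕ} (A : Fin (n + 1) → ℕ) (r : ℕ) :
    Fin.tail (fun k => A k / r) = fun k : Fin n => Fin.tail A k / r := rfl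

lemma Pchain_div {r : ℕ} (hr : 0 < r) : ∀ (n prev b : ℕ) (w A : Fin n → ℕ),
    prev < r → (∀ k, w k < r) → (∀ k, A k % r = w k) →
    (Pchain n (r * b + prev) (fun _ => 0) A ↔
      Pchain n b (gvec n prev w) (fun k => A k / r)) := by
  intro n
  induction n with
  | zero => intro prev b w A _ _ _; simp [Pchain]
  | succ n ih =>
    intro prev b w A hprev hw hA
    have hA0 : A 0 = r * (A 0 / r) + w 0 := by
      conv_lhs => rw [← Nat.div_add_mod (A 0) r]
      rw [hA 0]
    have hg0 : gvec (n + 1) prev w 0 = if prev < w 0 then 1 else 0 := by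
      simp [gvec]
    have htg : Fin.tail (gvec (n + 1) prev w) = gvec n (w 0) (Fin.tail w) := by
      simp [gvec]
    constructor
    · rintro ⟨h1, h2⟩
      have h1' : A 0 + 0 ≤ r * b + prev := h1
      refine ⟨?_, ?_⟩
      · show A 0 / r + gvec (n + 1) prev w 0 ≤ b
        rw [hg0, ← rle (A 0 / r) b (w 0) prev (hw 0) hprev, ← hA0]
        omega
      · show Pchain n ((fun k => A k / r) 0) (Fin.tail (gvec (n + 1) prev w))
          (Fin.tail fun k => A k / r)
        rw [htg, tail_div]
        refine (ih (w 0) (A 0 / r) (Fin.tail w) (Fin.tail A) (hw 0)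
          (fun k => hw k.succ) (fun k => hA k.succ)).1 ?_
        have h2' : Pchain n (A 0) (fun _ => 0) (Fin.tail A) := h2
        rwa [hA0] at h2'
    · rintro ⟨h1, h2⟩
      have h1' : A 0 / r + (if prev < w 0 then 1 else 0) ≤ b := by
        have h1'' : A 0 / r + gvec (n + 1) prev w 0 ≤ b := h1
        rwa [hg0] at h1''
      refine ⟨?_, ?_⟩
      · show A 0 + 0 ≤ r * b + prev
        rw [Nat.add_zero, hA0]
        exact (rle (A 0 / r) b (w 0) prev (hw 0) hprev).2 h1'
      · show Pchain n (A 0) (Fin.tail fun _ => 0) (Fin.tail A)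
        have h2' : Pchain n ((fun k => A k / r) 0) (gvec n (w 0) (Fin.tail w))
            (fun k => Fin.tail A k / r) := by
          have h2'' := h2
          rw [htg, tail_div] at h2''
          exact h2''
        have := (ih (w 0) (A 0 / r) (Fin.tail w) (Fin.tail A) (hw 0)
          (fun k => hw k.succ) (fun k => hA k.succ)).2 h2'
        rw [hA0]
        exact this

/-- The key counting identity. -/
lemma lemA (n r m : ℕ) (hr : 0 < r) :
    (∑ u ∈ Fintype.piFinset fun _ : Fin n => Finset.range r,
      if asc' u ≤ m then ((m - asc' u) + n).choose n else 0) = (r * m + n).choose n := by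
  have hrm : (r * m + n).choose n = (Sset n (r * m) fun _ => 0).card := by
    rw [card_Sset]
    simp
  rw [hrm]
  have hmap : ∀ A ∈ Sset n (r * m) (fun _ => 0),
      (fun k => A k % r) ∈ Fintype.piFinset fun _ : Fin n => Finset.range r := by
    intro A _
    exact Fintype.mem_piFinset.2 fun k => Finset.mem_range.2 (Nat.mod_lt _ hr)
  rw [Finset.card_eq_sum_card_fiberwise hmap]
  refine Finset.sum_congr rfl fun w hw => ?_
  have hwlt : ∀ k, w k < r := by
    intro k
    exact Finset.mem_range.1 (Fintype.mem_piFinset.1 hw k)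
  have hcard : ((Sset n (r * m) fun _ => 0).filter fun A => (fun k => A k % r) = w).card
      = (Sset n m (gvec n 0 w)).card := by
    refine Finset.card_bij' (fun A _ => fun k => A k / r) (fun Q _ => fun k => r * Q k + w k)
      ?_ ?_ ?_ ?_
    · intro A hA
      have h := Finset.mem_filter.1 hA
      have hP := mem_Sset.1 h.1
      have hAr : ∀ k, A k % r = w k := fun k => congrFun h.2 k
      rw [mem_Sset]
      exact (Pchain_div hr n 0 m w A hr hwlt hAr).1 (by rwa [Nat.add_zero])
    · intro Q hQ
      have hP := mem_Sset.1 hQ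
      have hAr : ∀ k, (r * Q k + w k) % r = w k := by
        intro k
        rw [Nat.mul_add_mod]
        exact Nat.mod_eq_of_lt (hwlt k)
      have hdiv : (fun k : Fin n => (r * Q k + w k) / r) = Q := by
        funext k
        rw [Nat.mul_add_div hr, Nat.div_eq_of_lt (hwlt k)]
        omega
      refine Finset.mem_filter.2 ⟨mem_Sset.2 ?_, funext hAr⟩
      have := (Pchain_div hr n 0 m w (fun k => r * Q k + w k) hr hwlt hAr).2
        (by rw [hdiv]; exact hP)
      rwa [Nat.add_zero] at this
    · intro A hA
      have h := Finset.mem_filter.1 hA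
      have hAr : ∀ k, A k % r = w k := fun k => congrFun h.2 k
      funext k
      show r * (A k / r) + w k = A k
      rw [← hAr k]
      exact Nat.div_add_mod (A k) r
    · intro Q _
      funext k
      show (r * Q k + w k) / r = Q k
      rw [Nat.mul_add_div hr, Nat.div_eq_of_lt (hwlt k)]
      omega
  rw [hcard, card_Sset, ← asc'_eq_gvec_sum]

/-- `(1-X) * Σ_k C(k+n+1, n+1) X^k = Σ_k C(k+n, n) X^k`. -/
lemma step_geom (n : ℕ) :
    (1 - PowerSeries.X : PowerSeries ℤ) *
        PowerSeries.mk (fun k => ((k + (n + 1)).choose (n + 1) : ℤ)) =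
      PowerSeries.mk (fun k => ((k + n).choose n : ℤ)) := by
  have expand : (1 - PowerSeries.X : PowerSeries ℤ) *
      PowerSeries.mk (fun k => ((k + (n + 1)).choose (n + 1) : ℤ))
      = PowerSeries.mk (fun k => ((k + (n + 1)).choose (n + 1) : ℤ))
        - PowerSeries.mk (fun k => ((k + (n + 1)).choose (n + 1) : ℤ)) * PowerSeries.X := by
    ring
  rw [expand]
  ext d
  rw [map_sub, PowerSeries.coeff_mk]
  have : (PowerSeries.X : PowerSeries ℤ) = PowerSeries.X ^ 1 := by rw [pow_one]
  rw [this, PowerSeries.coeff_mul_X_pow', PowerSeries.coeff_mk]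
  cases d with
  | zero => simp
  | succ d =>
    rw [if_pos (by omega)]
    rw [PowerSeries.coeff_mk]
    have harg : d + 1 - 1 = d := by omega
    rw [harg]
    have hps : (d + 1 + (n + 1)).choose (n + 1)
        = (d + 1 + n).choose n + (d + (n + 1)).choose (n + 1) := by
      have := Nat.choose_succ_succ (d + n + 1) n
      have h1 : d + 1 + (n + 1) = d + n + 1 + 1 := by omega
      have h2 : d + 1 + n = d + n + 1 := by omega
      have h3 : d + (n + 1) = d + n + 1 := by omega
      rw [h1, h2, h3, this]
    push_cast [hps]
    ring

lemma geom_inv : ∀ n : ℕ,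
    (1 - PowerSeries.X : PowerSeries ℤ) ^ (n + 1) *
      PowerSeries.mk (fun k => ((k + n).choose n : ℤ)) = 1 := by
  intro n
  induction n with
  | zero =>
    rw [pow_one]
    have expand : (1 - PowerSeries.X : PowerSeries ℤ) *
        PowerSeries.mk (fun k => ((k + 0).choose 0 : ℤ))
        = PowerSeries.mk (fun k => ((k + 0).choose 0 : ℤ))
          - PowerSeries.mk (fun k => ((k + 0).choose 0 : ℤ)) * PowerSeries.X := by
      ring
    rw [expand]
    ext d
    rw [map_sub, PowerSeries.coeff_mk]
    have hX : (PowerSeries.X : PowerSeries ℤ) = PowerSeries.X ^ 1 := by rw [pow_one]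
    rw [hX, PowerSeries.coeff_mul_X_pow', PowerSeries.coeff_one]
    cases d with
    | zero => simp
    | succ d =>
      rw [if_pos (by omega), if_neg (by omega), PowerSeries.coeff_mk]
      simp
  | succ n ih =>
    rw [pow_succ]
    rw [mul_assoc, step_geom n, ih]

theorem choose_series_eq_ascent_polynomial (n r : ℕ) (hn : 0 < n) (hr : 0 < r) :
    (1 - PowerSeries.X : PowerSeries ℤ) ^ (n + 1) *
        PowerSeries.mk (fun m => ((n + r * m).choose n : ℤ)) =
      ∑ u ∈ Fintype.piFinset fun _ : Fin n => Finset.range r,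
        (PowerSeries.X : PowerSeries ℤ) ^ asc' u := by
  set H : PowerSeries ℤ := PowerSeries.mk (fun k => ((k + n).choose n : ℤ)) with hH
  set G : PowerSeries ℤ := ∑ u ∈ Fintype.piFinset fun _ : Fin n => Finset.range r,
      (PowerSeries.X : PowerSeries ℤ) ^ asc' u with hG
  have hGH : G * H = PowerSeries.mk (fun m => ((n + r * m).choose n : ℤ)) := by
    ext m
    rw [PowerSeries.coeff_mk]
    rw [hG, Finset.sum_mul, map_sum]
    have hterm : ∀ u ∈ Fintype.piFinset fun _ : Fin n => Finset.range r,
        (PowerSeries.coeff m) ((PowerSeries.X : PowerSeries ℤ) ^ asc' u * H)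
          = if asc' u ≤ m then (((m - asc' u) + n).choose n : ℤ) else 0 := by
      intro u _
      rw [mul_comm, PowerSeries.coeff_mul_X_pow', hH]
      split_ifs with h
      · rw [PowerSeries.coeff_mk]
      · rfl
    rw [Finset.sum_congr rfl hterm]
    have := lemA n r m hr
    have hcast : (∑ u ∈ Fintype.piFinset fun _ : Fin n => Finset.range r,
        if asc' u ≤ m then (((m - asc' u) + n).choose n : ℤ) else 0)
        = ((r * m + n).choose n : ℤ) := by
      rw [← this]
      push_cast
      rfl
    rw [hcast]
    have harg : r * m + n = n + r * m := by omega
    rw [harg]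
  rw [← hGH]
  calc (1 - PowerSeries.X : PowerSeries ℤ) ^ (n + 1) * (G * H)
      = G * ((1 - PowerSeries.X : PowerSeries ℤ) ^ (n + 1) * H) := by ring
    _ = G * 1 := by rw [geom_inv n]
    _ = G := mul_one G
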